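/- The Lobachevsky function Λ(t) = -∫₀ᵗ ln|2 sin s| ds satisfies Λ(t + π) = Λ(t) for all real t (it is periodic with period π). -/

import Mathlib

/-- The Lobachevsky (Milnor) function. -/
noncomputable def lobachevsky (t : ℝ) : ℝ :=
  -∫ s in (0:ℝ)..t, Real.log |2 * Real.sin s|

open Real MeasureTheory intervalIntegral Set

namespace LobachevskyAux

noncomputable def F : ℝ → ℝ := fun s => Real.log |2 * Real.sin s|

lemma F_periodic : Function.Periodic F Real.pi := by
  intro s
  simp [F, Real.sin_add_pi, mul_neg, abs_neg]

lemma F_meas : Measurable F :=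
  Real.measurable_log.comp ((measurable_const.mul Real.measurable_sin).abs)

lemma int_log01 : IntervalIntegrable Real.log volume 0 1 := by
  have h : IntervalIntegrable (fun x : ℝ => -Real.log x) volume 0 1 := by
    apply intervalIntegrable_deriv_of_nonneg (g := fun x : ℝ => x - x * Real.log x)
    · exact (continuous_id.sub Real.continuous_mul_log).continuousOn
    · intro x hx
      simp only [min_eq_left (zero_le_one), max_eq_right (zero_le_one)] at hx
      have h1 := (hasDerivAt_id x).sub (Real.hasDerivAt_mul_log hx.1.ne')
      refine h1.congr_deriv ?_
      ring
    · intro x hx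
      simp only [min_eq_left (zero_le_one), max_eq_right (zero_le_one)] at hx
      have : Real.log x ≤ 0 := Real.log_nonpos hx.1.le hx.2.le
      linarith
  have h2 := h.neg
  have he : (-fun x : ℝ => -Real.log x) = Real.log := by funext x; simp
  rwa [he] at h2

lemma int_log0pi2 : IntervalIntegrable Real.log volume 0 (Real.pi / 2) := by
  refine int_log01.trans (intervalIntegrable_log ?_)
  have h2 : (1:ℝ) ≤ Real.pi / 2 := by linarith [Real.pi_gt_three]
  rw [Set.uIcc_of_le h2]
  rintro ⟨h0, -⟩
  norm_num at h0

lemma F_int1 : IntervalIntegrable F volume 0 (Real.pi / 2) := by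
  have hg : IntervalIntegrable (fun s => |Real.log s| + Real.log 2) volume 0 (Real.pi / 2) :=
    int_log0pi2.abs.add intervalIntegrable_const
  refine hg.mono_fun F_meas.aestronglyMeasurable ?_
  have h0 : (0:ℝ) ≤ Real.pi / 2 := by positivity
  filter_upwards [ae_restrict_mem measurableSet_uIoc] with x hx
  rw [Set.uIoc_of_le h0] at hx
  obtain ⟨hx0, hx2⟩ := hx
  have hxpi : x < Real.pi := lt_of_le_of_lt hx2 (by linarith [Real.pi_pos])
  have hs : 0 < Real.sin x := Real.sin_pos_of_pos_of_lt_pi hx0 hxpi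
  have habs : |2 * Real.sin x| = 2 * Real.sin x := abs_of_pos (by linarith)
  have hlow : x ≤ 2 * Real.sin x := by
    have h1 := Real.mul_le_sin hx0.le hx2
    rw [div_mul_eq_mul_div, div_le_iff₀ Real.pi_pos] at h1
    nlinarith [hs.le, Real.pi_le_four]
  have hup : 2 * Real.sin x ≤ 2 * x := by
    have := Real.sin_le hx0.le
    linarith
  have l1 : Real.log x ≤ F x := by
    rw [F, habs]
    exact Real.log_le_log hx0 hlow
  have l2 : F x ≤ Real.log 2 + Real.log x := by
    rw [F, habs, ← Real.log_mul (by norm_num) hx0.ne']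
    exact Real.log_le_log (by linarith) hup
  have hlog2 : (0:ℝ) ≤ Real.log 2 := Real.log_nonneg (by norm_num)
  have habs2 : (0:ℝ) ≤ |Real.log x| + Real.log 2 := by positivity
  simp only [Real.norm_eq_abs]
  rw [abs_of_nonneg habs2, abs_le]
  constructor
  · have := neg_abs_le (Real.log x)
    linarith
  · have := le_abs_self (Real.log x)
    linarith

lemma F_int2 : IntervalIntegrable F volume (Real.pi / 2) Real.pi := by
  have h := (F_int1.comp_sub_left Real.pi).symm
  have he : (fun x => F (Real.pi - x)) = F := by
    funext x
    simp [F, Real.sin_pi_sub]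
  rw [he] at h
  have e1 : Real.pi - Real.pi / 2 = Real.pi / 2 := by ring
  have e2 : Real.pi - 0 = Real.pi := by ring
  rwa [e1, e2] at h

lemma F_int : IntervalIntegrable F volume 0 Real.pi := F_int1.trans F_int2

lemma F_int_all (a b : ℝ) : IntervalIntegrable F volume a b := by
  suffices h : ∀ t : ℝ, IntervalIntegrable F volume 0 t from (h a).symm.trans (h b)
  have h1 : ∀ n : ℤ, IntervalIntegrable F volume (n * Real.pi) (n * Real.pi + Real.pi) := by
    intro n
    have h := F_int.comp_sub_right (n * Real.pi)
    have he : (fun x => F (x - n * Real.pi)) = F := by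
      funext x
      exact F_periodic.sub_int_mul_eq n
    rw [he] at h
    rw [zero_add, add_comm] at h
    exact h
  have h2 : ∀ m : ℤ, ∀ n : ℕ, IntervalIntegrable F volume (m * Real.pi) ((m + n) * Real.pi) := by
    intro m n
    induction n with
    | zero =>
        simp only [Nat.cast_zero, add_zero]
        constructor <;> simp
    | succ k ih =>
        refine ih.trans ?_
        have := h1 (m + k)
        have e1 : ((m : ℝ) + (k : ℕ)) * Real.pi = ((m + k : ℤ) : ℝ) * Real.pi := by push_cast; ring
        have e2 : ((m : ℝ) + ((k : ℕ) + 1 : ℕ)) * Real.pi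
            = ((m + k : ℤ) : ℝ) * Real.pi + Real.pi := by push_cast; ring
        rw [e1, e2]
        exact this
  intro t
  set n : ℕ := ⌈|t| / Real.pi⌉₊ with hn
  have hle : |t| ≤ n * Real.pi := by
    have := Nat.le_ceil (|t| / Real.pi)
    rw [div_le_iff₀ Real.pi_pos] at this
    exact this
  have hint : IntervalIntegrable F volume (-(n : ℝ) * Real.pi) ((n : ℝ) * Real.pi) := by
    have h3 := h2 (-(n : ℤ)) (2 * n)
    convert h3 using 2 <;> push_cast <;> ring
  refine hint.mono_set ?_
  have hnn : -(n : ℝ) * Real.pi ≤ (n : ℝ) * Real.pi := by nlinarith [Real.pi_pos, Nat.cast_nonneg (α := ℝ) n]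
  have h0mem : (0:ℝ) ∈ Set.Icc (-(n : ℝ) * Real.pi) ((n : ℝ) * Real.pi) := by
    constructor <;> nlinarith [Real.pi_pos, Nat.cast_nonneg (α := ℝ) n]
  have htmem : t ∈ Set.Icc (-(n : ℝ) * Real.pi) ((n : ℝ) * Real.pi) := by
    rw [abs_le] at hle
    constructor <;> [linarith [hle.1]; linarith [hle.2]]
  refine Set.uIcc_subset_uIcc ?_ ?_ <;> rw [Set.uIcc_of_le hnn]
  exacts [h0mem, htmem]

lemma F_integral_zero : ∫ s in (0:ℝ)..Real.pi, F s = 0 := by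
  have hpi := Real.pi_pos
  -- a.e. pointwise duplication identity
  have hsin : ∀ᵐ x : ℝ, Real.sin x ≠ 0 := by
    have hsub : {x : ℝ | Real.sin x = 0} ⊆ Set.range (fun n : ℤ => (n : ℝ) * Real.pi) := by
      intro x hx
      obtain ⟨n, hn⟩ := Real.sin_eq_zero_iff.1 hx
      exact ⟨n, hn⟩
    have hz : volume {x : ℝ | Real.sin x = 0} = 0 :=
      measure_mono_null hsub ((Set.countable_range _).measure_zero _)
    rw [ae_iff]
    simpa using hz
  have hae : ∀ᵐ x : ℝ, x ∈ Set.uIoc (0:ℝ) Real.pi →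
      F x = F (x / 2) + F (x / 2 + Real.pi / 2) := by
    filter_upwards [hsin] with x hx _
    have h2 : Real.sin x = 2 * Real.sin (x / 2) * Real.cos (x / 2) := by
      have h := Real.sin_two_mul (x / 2)
      rw [show 2 * (x / 2) = x by ring] at h
      exact h
    have hs : Real.sin (x / 2) ≠ 0 := by
      intro h; apply hx; rw [h2, h]; ring
    have hc : Real.cos (x / 2) ≠ 0 := by
      intro h; apply hx; rw [h2, h]; ring
    have hprod : 2 * Real.sin x = (2 * Real.sin (x / 2)) * (2 * Real.cos (x / 2)) := by
      rw [h2]; ring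
    have hF3 : F (x / 2 + Real.pi / 2) = Real.log |2 * Real.cos (x / 2)| := by
      rw [F, Real.sin_add_pi_div_two]
    rw [F, hprod, abs_mul,
      Real.log_mul (abs_ne_zero.2 (by simpa using hs)) (abs_ne_zero.2 (by simpa using hc)),
      hF3]
    rfl
  -- integrability of the two pieces
  have ia : IntervalIntegrable (fun s => F (s / 2)) volume 0 Real.pi := by
    have h := (F_int_all 0 (Real.pi / 2)).comp_mul_right (c := 1 / 2) enorm_ne_top enorm_ne_top
    have he : (fun x => F (x * (1 / 2))) = fun x => F (x / 2) := by
      funext x; rw [show x * (1 / 2 : ℝ) = x / 2 by ring]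
    rw [he] at h
    have e1 : (0:ℝ) / (1 / 2) = 0 := by norm_num
    have e2 : (Real.pi / 2) / (1 / 2 : ℝ) = Real.pi := by ring
    rwa [e1, e2] at h
  have ib : IntervalIntegrable (fun s => F (s / 2 + Real.pi / 2)) volume 0 Real.pi := by
    have hg : IntervalIntegrable (fun x => F (x + Real.pi / 2)) volume 0 (Real.pi / 2) := by
      have h := (F_int_all (Real.pi / 2) Real.pi).comp_add_right (Real.pi / 2)
      have e1 : Real.pi / 2 - Real.pi / 2 = 0 := by ring
      have e2 : Real.pi - Real.pi / 2 = Real.pi / 2 := by ring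
      rwa [e1, e2] at h
    have h := hg.comp_mul_right (c := 1 / 2) enorm_ne_top enorm_ne_top
    have he : (fun x => F (x * (1 / 2) + Real.pi / 2)) = fun x => F (x / 2 + Real.pi / 2) := by
      funext x; rw [show x * (1 / 2 : ℝ) = x / 2 by ring]
    rw [he] at h
    have e1 : (0:ℝ) / (1 / 2) = 0 := by norm_num
    have e2 : (Real.pi / 2) / (1 / 2 : ℝ) = Real.pi := by ring
    rwa [e1, e2] at h
  have key : ∫ s in (0:ℝ)..Real.pi, F s
      = (∫ s in (0:ℝ)..Real.pi, F (s / 2)) + ∫ s in (0:ℝ)..Real.pi, F (s / 2 + Real.pi / 2) := by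
    rw [intervalIntegral.integral_congr_ae hae]
    exact intervalIntegral.integral_add ia ib
  have e1 : ∫ s in (0:ℝ)..Real.pi, F (s / 2) = 2 * ∫ s in (0:ℝ)..(Real.pi / 2), F s := by
    rw [intervalIntegral.integral_comp_div (a := 0) (b := Real.pi) F (two_ne_zero)]
    norm_num [smul_eq_mul]
  have e2 : ∫ s in (0:ℝ)..Real.pi, F (s / 2 + Real.pi / 2)
      = 2 * ∫ s in (Real.pi / 2)..Real.pi, F s := by
    have hrw : (fun s : ℝ => F (s / 2 + Real.pi / 2)) = fun s => (fun u : ℝ => F (u / 2)) (s + Real.pi) := by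
      funext s
      show F (s / 2 + Real.pi / 2) = F ((s + Real.pi) / 2)
      rw [show s / 2 + Real.pi / 2 = (s + Real.pi) / 2 by ring]
    rw [hrw, intervalIntegral.integral_comp_add_right (fun u : ℝ => F (u / 2)) Real.pi,
      intervalIntegral.integral_comp_div (a := 0 + Real.pi) (b := Real.pi + Real.pi) F two_ne_zero]
    rw [show (0:ℝ) + Real.pi = Real.pi by ring]
    rw [show (Real.pi + Real.pi) / 2 = Real.pi by ring]
    simp [smul_eq_mul]
  have hsum : (∫ s in (0:ℝ)..(Real.pi / 2), F s) + ∫ s in (Real.pi / 2)..Real.pi, F s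
      = ∫ s in (0:ℝ)..Real.pi, F s :=
    intervalIntegral.integral_add_adjacent_intervals F_int1 F_int2
  linarith [key, e1, e2, hsum]

end LobachevskyAux

/-- The Lobachevsky function is periodic with period `π`. -/
theorem lobachevsky_periodic (t : ℝ) :
    lobachevsky (t + Real.pi) = lobachevsky t := by
  show -∫ s in (0:ℝ)..(t + Real.pi), LobachevskyAux.F s = -∫ s in (0:ℝ)..t, LobachevskyAux.F s
  have h := LobachevskyAux.F_periodic.intervalIntegral_add_eq_add 0 t
    (fun t₁ t₂ => LobachevskyAux.F_int_all t₁ t₂)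
  rw [zero_add, LobachevskyAux.F_integral_zero, add_zero] at h
  rw [h]
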